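/- For positive reals u, v and any ε > 0, if k = μ + ε/v where μ ≥ 2 is such that |π − p/q| < 1/q^k has only finitely many coprime positive integer solutions, then 1/(n^u · |sin n|^v) = O(1/n^(u − (μ−1)v − ε)) as n → ∞. -/

import Mathlib

set_option maxHeartbeats 1000000 in
open Real in
theorem seq_bigO (u v ε μ : ℝ) (hu : 0 < u) (hv : 0 < v) (hε : 0 < ε) (hμ : 2 ≤ μ)
    (hfin : {pq : ℕ × ℕ | 0 < pq.1 ∧ 0 < pq.2 ∧ Nat.Coprime pq.1 pq.2 ∧
        |π - (pq.1 : ℝ) / (pq.2 : ℝ)| < 1 / (pq.2 : ℝ) ^ (μ + ε / v)}.Finite) :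
    ∃ M : ℝ, ∃ N : ℕ, ∀ n : ℕ, N ≤ n →
      1 / ((n : ℝ) ^ u * |Real.sin n| ^ v) ≤ M * (n : ℝ) ^ (-(u - (μ - 1) * v - ε)) := by
  classical
  set k : ℝ := μ + ε / v with hkdef
  clear_value k
  have hεv : 0 < ε / v := div_pos hε hv
  have hk2 : 2 ≤ k := by simp only [hkdef]; linarith
  have hπ := Real.pi_pos
  -- a positive lower bound δ for |π - p/q| over the finite exceptional set
  have hex : ∃ δ : ℝ, 0 < δ ∧ ∀ pq ∈ {pq : ℕ × ℕ | 0 < pq.1 ∧ 0 < pq.2 ∧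
      Nat.Coprime pq.1 pq.2 ∧ |π - (pq.1 : ℝ) / (pq.2 : ℝ)| < 1 / (pq.2 : ℝ) ^ k},
      δ ≤ |π - (pq.1 : ℝ) / (pq.2 : ℝ)| := by
    have hfpos : ∀ pq : ℕ × ℕ, 0 < pq.2 → 0 < |π - (pq.1 : ℝ) / (pq.2 : ℝ)| := by
      intro pq hq
      have hne : π ≠ (pq.1 : ℝ) / (pq.2 : ℝ) := by
        intro h
        apply irrational_pi.ne_rat ((pq.1 : ℚ) / (pq.2 : ℚ))
        rw [h]; push_cast; ring
      exact abs_pos.2 (sub_ne_zero.2 hne)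
    refine ⟨(insert 1 ((hfin.image fun pq : ℕ × ℕ => |π - (pq.1 : ℝ) / (pq.2 : ℝ)|).toFinset)).min'
      (Finset.insert_nonempty _ _), ?_, ?_⟩
    · rw [show (0 : ℝ) < _ ↔ _ from Finset.lt_min'_iff _ _]
      intro b hb
      rcases Finset.mem_insert.mp hb with h | h
      · rw [h]; norm_num
      · rw [Set.Finite.mem_toFinset, Set.mem_image] at h
        obtain ⟨pq, hpq, heq⟩ := h
        exact heq ▸ hfpos pq hpq.2.1
    · intro pq hpq
      apply Finset.min'_le
      apply Finset.mem_insert_of_mem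
      rw [Set.Finite.mem_toFinset]
      exact Set.mem_image_of_mem _ hpq
  obtain ⟨δ, hδpos, hδ_le⟩ := hex
  refine ⟨(π / 2) ^ v, max 8 (⌈(4 : ℝ) / δ⌉₊ + 1), fun n hn => ?_⟩
  have hn8 : (8 : ℝ) ≤ n := by
    have h8 : 8 ≤ n := le_trans (le_max_left _ _) hn
    exact_mod_cast h8
  have hn0 : (0 : ℝ) < n := by linarith
  have hn1 : (1 : ℝ) ≤ n := by linarith
  have hnδ : 4 ≤ δ * n := by
    have h1 : (4 : ℝ) / δ ≤ (⌈(4 : ℝ) / δ⌉₊ + 1 : ℕ) := by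
      push_cast
      linarith [Nat.le_ceil ((4 : ℝ) / δ)]
    have h2 : ((⌈(4 : ℝ) / δ⌉₊ + 1 : ℕ) : ℝ) ≤ n :=
      Nat.cast_le.2 (le_trans (le_max_right 8 _) hn)
    have h3 := h1.trans h2
    rw [div_le_iff₀ hδpos] at h3
    linarith
  -- the rational approximation m
  have h315 : π < 3.15 := pi_lt_d2
  have h3 : 3 < π := pi_gt_three
  have htn : (n : ℝ) / π * π = n := div_mul_cancel₀ _ hπ.ne'
  have htpos : (0 : ℝ) < (n : ℝ) / π := div_pos hn0 hπ
  have hround : |(n : ℝ) / π - round ((n : ℝ) / π)| ≤ 1 / 2 := abs_sub_round _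
  have hrlb : (n : ℝ) / π - 1 / 2 ≤ round ((n : ℝ) / π) := by
    rw [abs_le] at hround; linarith
  have hrub : (round ((n : ℝ) / π) : ℝ) ≤ (n : ℝ) / π + 1 / 2 := by
    rw [abs_le] at hround; linarith
  have ht2 : (2 : ℝ) ≤ (n : ℝ) / π := by nlinarith
  have hrpos : 0 ≤ round ((n : ℝ) / π) := by
    have : (0 : ℝ) ≤ round ((n : ℝ) / π) := by linarith
    exact_mod_cast this
  set m : ℕ := (round ((n : ℝ) / π)).toNat with hm
  have hmr : ((m : ℕ) : ℝ) = (round ((n : ℝ) / π) : ℝ) := by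
    rw [hm]; exact_mod_cast Int.toNat_of_nonneg hrpos
  have hmlb : (n : ℝ) / 4 ≤ m := by
    rw [hmr]; nlinarith
  have hm0' : (0 : ℝ) < m := by nlinarith
  have hm0 : 0 < m := by exact_mod_cast hm0'
  have hmn : (m : ℝ) ≤ n := by
    rw [hmr]; nlinarith
  clear_value m
  have hdist : |(m : ℝ) * π - n| ≤ π / 2 := by
    have heq : (m : ℝ) * π - n = -(π * ((n : ℝ) / π - m)) := by
      field_simp; ring
    rw [heq, abs_neg, abs_mul, abs_of_pos hπ, hmr]
    calc π * |(n : ℝ) / π - (round ((n : ℝ) / π) : ℝ)| ≤ π * (1 / 2) :=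
          mul_le_mul_of_nonneg_left hround hπ.le
      _ = π / 2 := by ring
  -- reduce to lowest terms
  set d : ℕ := n.gcd m with hd
  have hd0 : 0 < d := Nat.gcd_pos_of_pos_right _ hm0
  set p : ℕ := n / d with hp
  set q : ℕ := m / d with hq
  have hn0' : 0 < n := by exact_mod_cast hn0
  have hp0 : 0 < p := Nat.div_pos (Nat.le_of_dvd hn0' (Nat.gcd_dvd_left n m)) hd0
  have hq0 : 0 < q := Nat.div_pos (Nat.le_of_dvd hm0 (Nat.gcd_dvd_right n m)) hd0
  have hcop : Nat.Coprime p q := Nat.coprime_div_gcd_div_gcd hd0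
  have hratio : (p : ℝ) / (q : ℝ) = (n : ℝ) / m := by
    have h1 : d * p = n := Nat.mul_div_cancel' (Nat.gcd_dvd_left n m)
    have h2 : d * q = m := Nat.mul_div_cancel' (Nat.gcd_dvd_right n m)
    rw [← h1, ← h2]
    push_cast
    rw [mul_div_mul_left _ _ (by exact_mod_cast hd0.ne' : (d : ℝ) ≠ 0)]
  have hqm : q ≤ m := Nat.div_le_self _ _
  clear_value d p q
  -- key diophantine lower bound
  have hkey : min δ ((m : ℝ) ^ (-k)) ≤ |π - (n : ℝ) / m| := by
    rw [← hratio]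
    rcases lt_or_ge |π - (p : ℝ) / (q : ℝ)| (1 / (q : ℝ) ^ k) with hlt | hge
    · exact le_trans (min_le_left _ _) (hδ_le (p, q) ⟨hp0, hq0, hcop, hlt⟩)
    · refine le_trans (min_le_right _ _) ?_
      refine le_trans ?_ hge
      rw [Real.rpow_neg (Nat.cast_nonneg m), ← one_div]
      apply one_div_le_one_div_of_le
      · exact Real.rpow_pos_of_pos (by exact_mod_cast hq0) k
      · exact Real.rpow_le_rpow (Nat.cast_nonneg q) (by exact_mod_cast hqm) (by linarith)
  -- lower bound |sin n|
  have h1k : 1 - k ≤ 0 := by linarith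
  have hlow : (n : ℝ) ^ (1 - k) ≤ |(m : ℝ) * π - n| := by
    have heq : (m : ℝ) * π - n = (m : ℝ) * (π - (n : ℝ) / m) := by
      field_simp
    rw [heq, abs_mul, abs_of_pos hm0']
    have h2 : (m : ℝ) * min δ ((m : ℝ) ^ (-k)) ≤ (m : ℝ) * |π - (n : ℝ) / m| :=
      mul_le_mul_of_nonneg_left hkey hm0'.le
    refine le_trans ?_ h2
    rw [mul_min_of_nonneg _ _ hm0'.le]
    apply le_min
    · have hle1 : (n : ℝ) ^ (1 - k) ≤ 1 := Real.rpow_le_one_of_one_le_of_nonpos hn1 h1k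
      refine hle1.trans ?_
      nlinarith [mul_le_mul_of_nonneg_right hmlb hδpos.le, hnδ, hδpos.le]
    · have hmm : (m : ℝ) * (m : ℝ) ^ (-k) = (m : ℝ) ^ (1 - k) := by
        rw [show (1 : ℝ) - k = 1 + (-k) by ring, Real.rpow_add hm0', Real.rpow_one]
      rw [hmm]
      exact Real.rpow_le_rpow_of_nonpos hm0' hmn h1k
  have hsin : 2 / π * (n : ℝ) ^ (1 - k) ≤ |Real.sin n| := by
    set y : ℝ := (m : ℝ) * π - n with hy
    have hy2 : |y| ≤ π / 2 := hdist
    have h1 : 2 / π * |y| ≤ Real.sin |y| := Real.mul_le_sin (abs_nonneg y) hy2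
    have h2 : Real.sin |y| = |Real.sin y| := by
      rcases abs_cases y with ⟨h, _⟩ | ⟨h, _⟩
      · rw [h, abs_of_nonneg]
        apply Real.sin_nonneg_of_nonneg_of_le_pi
        · rw [← h]; exact abs_nonneg y
        · rw [← h]; linarith
      · rw [h, Real.sin_neg, abs_of_nonpos]
        rw [← neg_nonneg, ← Real.sin_neg]
        apply Real.sin_nonneg_of_nonneg_of_le_pi
        · rw [show -y = |y| from h.symm]; exact abs_nonneg y
        · rw [show -y = |y| from h.symm]; linarith
    have h3 : |Real.sin y| = |Real.sin n| := by
      have hy' : y = ((m : ℤ) : ℝ) * π - (n : ℝ) := by push_cast [hy]; ring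
      rw [hy', Real.sin_int_mul_pi_sub]
      simp [abs_mul, abs_pow]
    calc 2 / π * (n : ℝ) ^ (1 - k) ≤ 2 / π * |y| := by
          apply mul_le_mul_of_nonneg_left hlow (by positivity)
      _ ≤ Real.sin |y| := h1
      _ = |Real.sin n| := by rw [h2, h3]
  -- conclude
  have hcpos : (0 : ℝ) < 2 / π * (n : ℝ) ^ (1 - k) := by positivity
  have hB : (2 / π * (n : ℝ) ^ (1 - k)) ^ v ≤ |Real.sin n| ^ v :=
    Real.rpow_le_rpow hcpos.le hsin hv.le
  have hApos : (0 : ℝ) < (n : ℝ) ^ u := Real.rpow_pos_of_pos hn0 u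
  have hden : (0 : ℝ) < (n : ℝ) ^ u * (2 / π * (n : ℝ) ^ (1 - k)) ^ v := by positivity
  have hle : 1 / ((n : ℝ) ^ u * |Real.sin n| ^ v) ≤
      1 / ((n : ℝ) ^ u * (2 / π * (n : ℝ) ^ (1 - k)) ^ v) :=
    one_div_le_one_div_of_le hden (mul_le_mul_of_nonneg_left hB hApos.le)
  refine hle.trans (le_of_eq ?_)
  have hexp : -(u - (μ - 1) * v - ε) = -(u + (1 - k) * v) := by
    have hdv : (ε / v) * v = ε := div_mul_cancel₀ ε hv.ne'
    simp only [hkdef]; nlinarith [hdv]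
  rw [hexp]
  rw [Real.mul_rpow (by positivity : (0:ℝ) ≤ 2/π) (Real.rpow_nonneg hn0.le _),
      ← Real.rpow_mul hn0.le,
      show (n:ℝ)^u * ((2/π)^v * (n:ℝ)^((1-k)*v)) = (2/π)^v * ((n:ℝ)^u * (n:ℝ)^((1-k)*v)) by ring,
      ← Real.rpow_add hn0, Real.rpow_neg hn0.le, one_div, mul_inv,
      ← Real.inv_rpow (by positivity : (0:ℝ) ≤ 2/π), inv_div]
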